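/- The sum over k from 0 to 2g+2 of 2^k(2^k-1) * binomial(2g+2, k) * B_k equals 0, where B_k are the Bernoulli numbers (with B_1 = -1/2). -/

import Mathlib

open PowerSeries Finset

namespace BernoulliIdentityAux

noncomputable def E : ℚ⟦X⟧ := PowerSeries.exp ℚ
noncomputable def Bs : ℚ⟦X⟧ := bernoulliPowerSeries ℚ
noncomputable def F : ℚ⟦X⟧ :=
  (PowerSeries.rescale (4 : ℚ) Bs - PowerSeries.rescale (2 : ℚ) Bs) * E

lemma rescale_C' (a r : ℚ) :
    PowerSeries.rescale a (PowerSeries.C (R := ℚ) r) = PowerSeries.C (R := ℚ) r := by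
  ext n
  simp only [PowerSeries.coeff_rescale, PowerSeries.coeff_C]
  split_ifs with h <;> simp [h]

lemma rescaleB (a : ℕ) :
    PowerSeries.rescale (a : ℚ) Bs * (E ^ a - 1) =
      PowerSeries.C (R := ℚ) (a : ℚ) * PowerSeries.X := by
  have h := congrArg (PowerSeries.rescale (a : ℚ)) (bernoulliPowerSeries_mul_exp_sub_one ℚ)
  rw [map_mul, map_sub, map_one, PowerSeries.rescale_X] at h
  unfold E Bs
  rw [PowerSeries.exp_pow_eq_rescale_exp]
  exact h

lemma h2 : PowerSeries.rescale (2 : ℚ) Bs * (E ^ 2 - 1) =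
    PowerSeries.C (R := ℚ) 2 * PowerSeries.X := by
  have := rescaleB 2; norm_num at this ⊢; exact this

lemma h4 : PowerSeries.rescale (4 : ℚ) Bs * (E ^ 4 - 1) =
    PowerSeries.C (R := ℚ) 4 * PowerSeries.X := by
  have := rescaleB 4; norm_num at this ⊢; exact this

lemma Esq_sub_one_ne : E ^ 2 - 1 ≠ 0 := by
  intro h
  have h1 := congrArg (PowerSeries.coeff (R := ℚ) 1) h
  rw [map_sub] at h1
  have : PowerSeries.coeff (R := ℚ) 1 (E ^ 2) = 2 := by
    unfold E
    rw [show ((2:ℚ)) = ((2:ℕ):ℚ) by norm_num] at *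
    rw [PowerSeries.exp_pow_eq_rescale_exp, PowerSeries.coeff_rescale, PowerSeries.coeff_exp]
    norm_num
  rw [this] at h1
  simp at h1

lemma stepA : F * (E ^ 2 + 1) = -(PowerSeries.C (R := ℚ) 2 * PowerSeries.X * E) := by
  apply mul_right_cancel₀ Esq_sub_one_ne
  have hC : PowerSeries.C (R := ℚ) (4 : ℚ) = PowerSeries.C (R := ℚ) 2 + PowerSeries.C (R := ℚ) 2 := by
    rw [← map_add]; norm_num
  unfold F
  linear_combination E * h4 - (E ^ 2 + 1) * E * h2 + PowerSeries.X * E * hC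

lemma hEE : E * PowerSeries.rescale (-1 : ℚ) E = 1 := by
  have := PowerSeries.exp_mul_exp_neg_eq_one (A := ℚ)
  exact this

lemma stepB : PowerSeries.rescale (-1 : ℚ) F = -F := by
  have hrF : PowerSeries.rescale (-1 : ℚ) F * ((PowerSeries.rescale (-1 : ℚ) E) ^ 2 + 1) =
      PowerSeries.C (R := ℚ) 2 * PowerSeries.X * PowerSeries.rescale (-1 : ℚ) E := by
    have h := congrArg (PowerSeries.rescale (-1 : ℚ)) stepA
    rw [map_mul, map_add, map_pow, map_one, map_neg, map_mul, map_mul,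
      PowerSeries.rescale_neg_one_X, rescale_C'] at h
    rw [h]; ring
  have hz : (PowerSeries.rescale (-1 : ℚ) F + F) *
      (((PowerSeries.rescale (-1 : ℚ) E) ^ 2 + 1) * E ^ 2) = 0 := by
    linear_combination E ^ 2 * hrF + stepA +
      (F * (E * PowerSeries.rescale (-1 : ℚ) E + 1) +
        PowerSeries.C (R := ℚ) 2 * PowerSeries.X * E) * hEE
  have hne : (((PowerSeries.rescale (-1 : ℚ) E) ^ 2 + 1) * E ^ 2) ≠ 0 := by
    intro h
    have h0 := congrArg (PowerSeries.constantCoeff (R := ℚ)) h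
    simp only [map_mul, map_add, map_pow, map_one] at h0
    have he : PowerSeries.constantCoeff (R := ℚ) E = 1 := PowerSeries.constantCoeff_exp
    have hre : PowerSeries.constantCoeff (R := ℚ) (PowerSeries.rescale (-1 : ℚ) E) = 1 := by
      rw [← PowerSeries.coeff_zero_eq_constantCoeff_apply, PowerSeries.coeff_rescale]
      simp [he, ← PowerSeries.coeff_zero_eq_constantCoeff_apply]
    rw [he, hre] at h0
    norm_num at h0
  have := mul_eq_zero.mp hz
  rcases this with h | h
  · exact eq_neg_of_add_eq_zero_left h
  · exact absurd h hne

end BernoulliIdentityAux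

open BernoulliIdentityAux in
theorem bernoulli_identity (g : ℕ) :
    ∑ k ∈ Finset.range (2 * g + 3),
      (2 : ℚ) ^ k * ((2 : ℚ) ^ k - 1) * (Nat.choose (2 * g + 2) k : ℚ) * bernoulli k = 0 := by
  have hF : PowerSeries.coeff (R := ℚ) (2 * g + 2) F = 0 := by
    have h := congrArg (PowerSeries.coeff (R := ℚ) (2 * g + 2)) stepB
    rw [PowerSeries.coeff_rescale, map_neg] at h
    have hpow : (-1 : ℚ) ^ (2 * g + 2) = 1 := by
      rw [show 2 * g + 2 = 2 * (g + 1) by ring, pow_mul]; norm_num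
    rw [hpow, one_mul] at h
    linarith
  have hcm : PowerSeries.coeff (R := ℚ) (2 * g + 2) F =
      ∑ k ∈ Finset.range (2 * g + 3),
        (PowerSeries.coeff (R := ℚ) k (PowerSeries.rescale (4 : ℚ) Bs - PowerSeries.rescale (2 : ℚ) Bs))
          * PowerSeries.coeff (R := ℚ) (2 * g + 2 - k) E := by
    rw [show F = (PowerSeries.rescale (4 : ℚ) Bs - PowerSeries.rescale (2 : ℚ) Bs) * E from rfl,
      PowerSeries.coeff_mul, Finset.Nat.sum_antidiagonal_eq_sum_range_succ_mk]
  rw [hcm] at hF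
  have key : ∀ k ∈ Finset.range (2 * g + 3),
      (2 : ℚ) ^ k * ((2 : ℚ) ^ k - 1) * (Nat.choose (2 * g + 2) k : ℚ) * bernoulli k
        = ((2 * g + 2).factorial : ℚ) *
          ((PowerSeries.coeff (R := ℚ) k (PowerSeries.rescale (4 : ℚ) Bs
              - PowerSeries.rescale (2 : ℚ) Bs))
            * PowerSeries.coeff (R := ℚ) (2 * g + 2 - k) E) := by
    intro k hk
    have hkle : k ≤ 2 * g + 2 := by
      have := Finset.mem_range.mp hk; omega
    rw [map_sub, PowerSeries.coeff_rescale, PowerSeries.coeff_rescale]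
    rw [show E = PowerSeries.exp ℚ from rfl, PowerSeries.coeff_exp]
    rw [show Bs = bernoulliPowerSeries ℚ from rfl]
    simp only [bernoulliPowerSeries, PowerSeries.coeff_mk, Algebra.algebraMap_self, RingHom.id_apply]
    rw [Nat.cast_choose ℚ hkle]
    have h1 : (k.factorial : ℚ) ≠ 0 := Nat.cast_ne_zero.mpr k.factorial_ne_zero
    have h2 : ((2 * g + 2 - k).factorial : ℚ) ≠ 0 :=
      Nat.cast_ne_zero.mpr (2 * g + 2 - k).factorial_ne_zero
    rw [show (4 : ℚ) = 2 * 2 by norm_num, mul_pow]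
    field_simp
  rw [Finset.sum_congr rfl key, ← Finset.mul_sum, hF, mul_zero]
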